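/- With the setup of the generalized discrete Weyl construction (n ≤ m), the partial trace over the first factor satisfies tr_A(|ψ_{ij}⟩⟨ψ_{ij}|) = (1/n) X^i (∑_{s=0}^{n−1} |s⟩⟨s|) X^{−i}, and in particular it is independent of j. -/

import Mathlib

open ComplexOrder

/-- `ω = e^{2πi/n}`, a primitive `n`-th root of unity. -/
noncomputable def omegaC (n : ℕ) : ℂ := Complex.exp (2 * Real.pi * Complex.I / n)

/-- The cyclic shift operator `X` on `ℂ^m`: `X |j⟩ = |j + 1 mod m⟩`. -/
def shiftX (m : ℕ) [NeZero m] : Matrix (Fin m) (Fin m) ℂ :=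
  fun i j => if i = j + 1 then 1 else 0

/-- The generalized clock operator `Z_n` on `ℂ^m`: `Z_n |i⟩ = ω^i |i⟩` with `ω = e^{2πi/n}`. -/
noncomputable def weylZ (n m : ℕ) : Matrix (Fin m) (Fin m) ℂ :=
  Matrix.diagonal fun i : Fin m => omegaC n ^ (i : ℕ)

/-- The maximally entangled state `|ψ₀₀⟩ = (1/√n) ∑_{s<n} |s⟩ ⊗ |s⟩` in `ℂ^n ⊗ ℂ^m`. -/
noncomputable def psi00 (n m : ℕ) : Fin n × Fin m → ℂ :=
  fun p => if (p.1 : ℕ) = (p.2 : ℕ) then ((Real.sqrt n : ℝ)⁻¹ : ℂ) else 0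

/-- Apply an operator `M` on `ℂ^m` to the second tensor factor of `ℂ^n ⊗ ℂ^m`. -/
noncomputable def applyB {n m : ℕ} (M : Matrix (Fin m) (Fin m) ℂ)
    (v : Fin n × Fin m → ℂ) : Fin n × Fin m → ℂ :=
  fun p => ∑ c : Fin m, M p.2 c * v (p.1, c)

/-- `|ψ_{ij}⟩ = (I_n ⊗ X^i Z_n^j) |ψ₀₀⟩`. -/
noncomputable def psiV (n m : ℕ) [NeZero m] (i : Fin m) (j : Fin n) :
    Fin n × Fin m → ℂ :=
  applyB (shiftX m ^ (i : ℕ) * weylZ n m ^ (j : ℕ)) (psi00 n m)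

/-- The rank-one projector `|v⟩⟨v|`. -/
noncomputable def proj {α : Type*} (v : α → ℂ) : Matrix α α ℂ :=
  fun p q => v p * star (v q)

/-- Partial trace over the second tensor factor. -/
noncomputable def trB {n m : ℕ} (ρ : Matrix (Fin n × Fin m) (Fin n × Fin m) ℂ) :
    Matrix (Fin n) (Fin n) ℂ :=
  fun a a' => ∑ b : Fin m, ρ (a, b) (a', b)

/-- Partial trace over the first tensor factor. -/
noncomputable def trA {n m : ℕ} (ρ : Matrix (Fin n × Fin m) (Fin n × Fin m) ℂ) :
    Matrix (Fin m) (Fin m) ℂ :=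
  fun b b' => ∑ a : Fin n, ρ (a, b) (a, b')

/-- The projector `∑_{s<n} |s⟩⟨s|` on `ℂ^m`. -/
def Pproj (n m : ℕ) : Matrix (Fin m) (Fin m) ℂ :=
  fun a b => if a = b ∧ (a : ℕ) < n then 1 else 0

open Matrix
open Fin.NatCast
lemma shiftX_pow (m : ℕ) [NeZero m] (k : ℕ) :
    shiftX m ^ k = fun a b : Fin m => if a = b + (k : Fin m) then 1 else 0 := by
  induction k with
  | zero => ext a b; simp [Matrix.one_apply, shiftX]
  | succ k ih =>
    ext a b
    rw [pow_succ, Matrix.mul_apply]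
    simp only [ih, shiftX, mul_ite, mul_one, mul_zero, Finset.sum_ite_eq']
    have : ((k:ℕ)+1 : Fin m) = (k : Fin m) + 1 := by ring
    simp [this, add_comm, add_assoc, add_left_comm]

lemma shiftX_pow_inv (m : ℕ) [NeZero m] (k : ℕ) :
    (shiftX m ^ k)⁻¹ = (shiftX m ^ k)ᵀ := by
  apply Matrix.inv_eq_right_inv
  ext a b
  rw [Matrix.mul_apply]
  simp only [shiftX_pow, Matrix.transpose_apply, mul_ite, mul_one, mul_zero]
  have h : ∀ d c : Fin m, (d = c + (k:Fin m)) ↔ (c = d - k) := by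
    intro d c; rw [eq_sub_iff_add_eq, eq_comm]
  simp only [h]
  simp only [Matrix.transpose, Matrix.of_apply, mul_ite, mul_one, mul_zero]
  rw [Finset.sum_ite_eq' Finset.univ ((b:Fin m) - k)]
  simp [Matrix.one_apply, sub_left_inj, eq_comm]

lemma star_omegaC (n : ℕ) : star (omegaC n) = (omegaC n)⁻¹ := by
  rw [omegaC, ← Complex.exp_neg]
  rw [show (star (Complex.exp (2 * ↑Real.pi * Complex.I / ↑n)) : ℂ) =
      Complex.exp ((starRingEnd ℂ) (2 * Real.pi * Complex.I / n)) from
    (Complex.exp_conj _).symm]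
  congr 1
  simp only [map_div₀, _root_.map_mul, Complex.conj_I, Complex.conj_ofReal, map_ofNat,
    Complex.conj_natCast]
  ring

lemma omegaC_ne_zero (n : ℕ) : omegaC n ≠ 0 := by
  rw [omegaC]; exact Complex.exp_ne_zero _

lemma omegaC_mul_star (n : ℕ) :
    omegaC n * (starRingEnd ℂ) (omegaC n) = 1 := by
  rw [show ((starRingEnd ℂ) (omegaC n)) = star (omegaC n) from rfl, star_omegaC,
    mul_inv_cancel₀ (omegaC_ne_zero n)]

lemma psiV_apply (n m : ℕ) [NeZero n] [NeZero m] (hnm : n ≤ m)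
    (i : Fin m) (j : Fin n) (a : Fin n) (b : Fin m) :
    psiV n m i j (a, b) =
      if ((b - i : Fin m) : ℕ) = (a : ℕ) then
        ((Real.sqrt n : ℝ)⁻¹ : ℂ) * (omegaC n ^ (a : ℕ)) ^ (j : ℕ) else 0 := by
  have hz : weylZ n m ^ (j:ℕ) =
      Matrix.diagonal fun s : Fin m => (omegaC n ^ (s : ℕ)) ^ (j:ℕ) := by
    rw [weylZ, Matrix.diagonal_pow]
    congr 1
  simp only [psiV, applyB, hz, Matrix.mul_diagonal]
  have hcond : ∀ c : Fin m, ((a : ℕ) = (c : ℕ)) ↔ (c = Fin.castLE hnm a) := by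
    intro c; rw [Fin.ext_iff, Fin.coe_castLE, eq_comm]
  simp only [psi00, hcond, shiftX_pow]
  simp only [mul_ite, mul_zero, mul_one, ite_mul, zero_mul]
  rw [Finset.sum_ite_eq' Finset.univ (Fin.castLE hnm a)]
  have hb : (b = Fin.castLE hnm a + i) ↔ (((b - i : Fin m) : ℕ) = (a : ℕ)) := by
    rw [← sub_eq_iff_eq_add, Fin.ext_iff, Fin.coe_castLE]
  simp [hb, Fin.coe_castLE, mul_comm]

lemma key (n m : ℕ) [NeZero n] [NeZero m] (hnm : n ≤ m) (i : Fin m) (j : Fin n) :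
    trA (proj (psiV n m i j)) =
      ((n : ℂ))⁻¹ • (shiftX m ^ (i : ℕ) * Pproj n m * (shiftX m ^ (i : ℕ))⁻¹) := by
  ext b b'
  have hr : (((Real.sqrt n : ℝ) : ℂ))⁻¹ * (((Real.sqrt n : ℝ) : ℂ))⁻¹ = ((n:ℂ))⁻¹ := by
    rw [← mul_inv, ← Complex.ofReal_mul, Real.mul_self_sqrt (Nat.cast_nonneg n),
      Complex.ofReal_natCast]
  have hsub : ∀ d c : Fin m, (d = c + i) ↔ (c = d - i) := by
    intro d c; rw [eq_sub_iff_add_eq, eq_comm]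
  -- LHS
  have hterm : ∀ a : Fin n, psiV n m i j (a, b) * star (psiV n m i j (a, b')) =
      if ((b - i : Fin m) : ℕ) = (a : ℕ) ∧ ((b' - i : Fin m) : ℕ) = (a : ℕ)
        then ((n:ℂ))⁻¹ else 0 := by
    intro a
    rw [psiV_apply n m hnm, psiV_apply n m hnm]
    by_cases h1 : ((b - i : Fin m) : ℕ) = (a : ℕ) <;>
      by_cases h2 : ((b' - i : Fin m) : ℕ) = (a : ℕ)
    · rw [if_pos h1, if_pos h2, if_pos ⟨h1, h2⟩]
      rw [star_mul']
      rw [show star ((((Real.sqrt n : ℝ)) : ℂ))⁻¹ = ((((Real.sqrt n : ℝ)) : ℂ))⁻¹ by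
        rw [star_inv₀, Complex.star_def, Complex.conj_ofReal]]
      rw [show star ((omegaC n ^ (a:ℕ)) ^ (j:ℕ)) =
          (((starRingEnd ℂ) (omegaC n)) ^ (a:ℕ)) ^ (j:ℕ) by
        rw [Complex.star_def, map_pow, map_pow]]
      rw [mul_mul_mul_comm, ← mul_pow, ← mul_pow, omegaC_mul_star, one_pow, one_pow,
        mul_one, hr]
    · rw [if_pos h1, if_neg h2, if_neg (by tauto), star_zero, mul_zero]
    · rw [if_neg h1, if_pos h2, if_neg (by tauto), zero_mul]
    · rw [if_neg h1, if_neg h2, if_neg (by tauto), zero_mul]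
  have hLHS : trA (proj (psiV n m i j)) b b' =
      ∑ a : Fin n, if ((b - i : Fin m) : ℕ) = (a : ℕ) ∧ ((b' - i : Fin m) : ℕ) = (a : ℕ)
        then ((n:ℂ))⁻¹ else 0 := by
    simp only [trA, proj]
    exact Finset.sum_congr rfl fun a _ => hterm a
  -- RHS
  have hXP : ∀ c' : Fin m, (shiftX m ^ (i:ℕ) * Pproj n m) b c' =
      if c' = b - i ∧ ((b - i : Fin m) : ℕ) < n then 1 else 0 := by
    intro c'
    rw [Matrix.mul_apply]
    simp only [shiftX_pow, Pproj, Fin.cast_val_eq_self, ite_mul, one_mul, zero_mul,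
      hsub, ite_and]
    rw [Finset.sum_ite_eq' Finset.univ ((b:Fin m) - i)]
    simp only [Finset.mem_univ, if_true]
    by_cases hc : c' = b - i
    · subst hc; simp
    · simp [hc, Ne.symm hc, fun h : b - i = c' => hc h.symm]
  have hRHS : (((n : ℂ))⁻¹ • (shiftX m ^ (i : ℕ) * Pproj n m * (shiftX m ^ (i : ℕ))⁻¹)) b b' =
      if b = b' ∧ ((b' - i : Fin m) : ℕ) < n then ((n:ℂ))⁻¹ else 0 := by
    rw [shiftX_pow_inv, Matrix.smul_apply, Matrix.mul_apply]
    rw [Finset.sum_congr rfl fun c' _ => by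
      rw [Matrix.transpose_apply, hXP c']]
    simp only [shiftX_pow, Fin.cast_val_eq_self, ite_and, ite_mul, one_mul, zero_mul]
    rw [Finset.sum_ite_eq' Finset.univ ((b:Fin m) - i)]
    simp only [Finset.mem_univ, if_true, sub_add_cancel, smul_eq_mul]
    by_cases h1 : ((b - i : Fin m) : ℕ) < n <;> by_cases h2 : b' = b
    · subst h2; simp [h1]
    · have h2' : ¬ b = b' := fun h => h2 h.symm
      simp [h1, h2, h2']
    · subst h2; simp [h1]
    · have h2' : ¬ b = b' := fun h => h2 h.symm
      simp [h1, h2, h2']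
  rw [hLHS, hRHS]
  by_cases hb : ((b - i : Fin m) : ℕ) < n
  · have hcond : ∀ a : Fin n,
        (((b - i : Fin m) : ℕ) = (a : ℕ) ∧ ((b' - i : Fin m) : ℕ) = (a : ℕ))
        ↔ (a = (⟨((b - i : Fin m) : ℕ), hb⟩ : Fin n) ∧
            ((b' - i : Fin m) : ℕ) = ((b - i : Fin m) : ℕ)) := by
      intro a
      constructor
      · rintro ⟨h1, h2⟩; exact ⟨Fin.ext h1.symm, h2.trans h1.symm⟩
      · rintro ⟨rfl, h2⟩; exact ⟨rfl, h2⟩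
    rw [Finset.sum_congr rfl fun a _ => if_congr (hcond a) rfl rfl]
    simp only [ite_and]
    rw [Finset.sum_ite_eq' Finset.univ (⟨((b - i : Fin m) : ℕ), hb⟩ : Fin n)]
    simp only [Finset.mem_univ, if_true]
    have hiff : (((b' - i : Fin m) : ℕ) = ((b - i : Fin m) : ℕ))
        ↔ (b = b' ∧ ((b' - i : Fin m) : ℕ) < n) := by
      constructor
      · intro h
        have heq : b' - i = b - i := Fin.ext h
        have hb' : b' = b := by
          have := congrArg (· + i) heq
          simpa [sub_add_cancel] using this
        exact ⟨hb'.symm, by rw [h]; exact hb⟩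
      · rintro ⟨rfl, h⟩; rfl
    rw [if_congr hiff rfl rfl, ite_and]
  · have h0 : ∀ a : Fin n,
        ¬ (((b - i : Fin m) : ℕ) = (a : ℕ) ∧ ((b' - i : Fin m) : ℕ) = (a : ℕ)) := by
      rintro a ⟨h1, -⟩; exact hb (h1 ▸ a.isLt)
    have h0' : ¬ (b = b' ∧ ((b' - i : Fin m) : ℕ) < n) := by
      rintro ⟨rfl, h⟩; exact hb h
    rw [Finset.sum_congr rfl fun a _ => if_neg (h0 a), if_neg h0', Finset.sum_const_zero]

/-- `tr_A |ψ_{ij}⟩⟨ψ_{ij}| = (1/n) X^i (∑_{s<n} |s⟩⟨s|) X^{-i}`; in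
particular it does not depend on `j`. -/
theorem trA_proj_psiV (n m : ℕ) [NeZero n] [NeZero m] (hnm : n ≤ m)
    (i : Fin m) (j : Fin n) :
    trA (proj (psiV n m i j)) =
        ((n : ℂ))⁻¹ • (shiftX m ^ (i : ℕ) * Pproj n m * (shiftX m ^ (i : ℕ))⁻¹) ∧
      ∀ j' : Fin n, trA (proj (psiV n m i j')) = trA (proj (psiV n m i j)) := by
  exact ⟨key n m hnm i j, fun j' => by rw [key n m hnm i j', key n m hnm i j]⟩
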